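/- Let X and Y be spectral (coherent) topological spaces and f : X → Y a continuous spectral map. Then the range of f, equipped with the subspace topology from Y, is again a spectral space: it is compact, T0, quasi-sober, quasi-separated, and its compact open sets form a basis of its topology. -/

import Mathlib

/-- A topological space is spectral (coherent) if it is compact, `T0`, quasi-sober,
quasi-separated, and its compact open sets form a basis of the topology. -/
def IsSpectralSpace (X : Type*) [TopologicalSpace X] : Prop :=
  CompactSpace X ∧ T0Space X ∧ QuasiSober X ∧ QuasiSeparatedSpace X ∧
    TopologicalSpace.IsTopologicalBasis {U : Set X | IsOpen U ∧ IsCompact U}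

open Set TopologicalSpace Topology

/-- Every compact open subset of the range (with the subspace topology) is the trace of a
compact open subset of the target. -/
lemma aux_compact_open_trace {X Y : Type*} [TopologicalSpace X] [TopologicalSpace Y]
    (hYb : IsTopologicalBasis {U : Set Y | IsOpen U ∧ IsCompact U})
    {f : X → Y} (hf : IsSpectralMap f) {U : Set (Set.range f)}
    (hUo : IsOpen U) (hUc : IsCompact U) :
    ∃ V : Set Y, IsOpen V ∧ IsCompact V ∧ Subtype.val '' U = V ∩ Set.range f := by
  obtain ⟨W, hW, rfl⟩ := isOpen_induced_iff.mp hUo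
  have himg : Subtype.val '' (Subtype.val ⁻¹' W : Set (Set.range f)) = W ∩ Set.range f :=
    (Subtype.image_preimage_coe _ _).trans (Set.inter_comm _ _)
  have hcpt : IsCompact (W ∩ Set.range f) := by
    rw [← himg]; exact hUc.image continuous_subtype_val
  -- cover `W ∩ range f` by finitely many basic compact opens contained in `W`
  have hcover : W ∩ Set.range f ⊆ ⋃ V : {V : Set Y // (IsOpen V ∧ IsCompact V) ∧ V ⊆ W},
      (V : Set Y) := by
    intro y hy
    obtain ⟨V, hV, hyV, hVW⟩ := hYb.exists_subset_of_mem_open hy.1 hW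
    exact mem_iUnion.mpr ⟨⟨V, hV, hVW⟩, hyV⟩
  obtain ⟨t, ht⟩ := hcpt.elim_finite_subcover _ (fun V => V.2.1.1) hcover
  refine ⟨⋃ V ∈ t, (V : Set Y), isOpen_biUnion fun V _ => V.2.1.1, ?_, ?_⟩
  · exact t.isCompact_biUnion fun V _ => V.2.1.2
  · rw [himg]
    apply Set.Subset.antisymm
    · intro y hy
      rcases mem_iUnion₂.mp (ht hy) with ⟨V, hVt, hyV⟩
      exact ⟨mem_biUnion hVt hyV, hy.2⟩
    · intro y hy
      rcases mem_iUnion₂.mp hy.1 with ⟨V, hVt, hyV⟩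
      exact ⟨V.2.2 hyV, hy.2⟩

/-- The image of a spectral map of spectral spaces, with the subspace topology,
is again a spectral space. -/
theorem stmt_13 {X Y : Type*} [TopologicalSpace X] [TopologicalSpace Y]
    (hX : IsSpectralSpace X) (hY : IsSpectralSpace Y)
    (f : X → Y) (hf : IsSpectralMap f) :
    IsSpectralSpace (Set.range f) := by
  obtain ⟨hX1, hX2, hX3, hX4, hX5⟩ := hX
  obtain ⟨hY1, hY2, hY3, hY4, hY5⟩ := hY
  have hemb : IsEmbedding (Subtype.val : Set.range f → Y) := IsEmbedding.subtypeVal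
  -- compactness of traces of compact opens
  have htrace : ∀ V : Set Y, IsOpen V → IsCompact V →
      IsCompact (Subtype.val ⁻¹' V : Set (Set.range f)) := by
    intro V hVo hVc
    rw [hemb.isCompact_iff, Subtype.image_preimage_coe, Set.inter_comm,
      ← Set.image_preimage_eq_inter_range]
    exact (hf.isCompact_preimage_of_isOpen hVo hVc).image hf.continuous
  refine ⟨?_, inferInstance, ?_, ?_, ?_⟩
  · -- compact
    rw [← isCompact_univ_iff, hemb.isCompact_iff, Set.image_univ, Subtype.range_coe]
    exact isCompact_range hf.continuous
  · -- quasi-sober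
    constructor
    intro Z hZirr hZcl
    have hT : IsIrreducible (Subtype.val '' Z : Set Y) :=
      hZirr.image _ continuous_subtype_val.continuousOn
    set T : Set Y := Subtype.val '' Z with hTdef
    obtain ⟨y, hy⟩ := hY3.sober hT.closure isClosed_closure
    -- `hy : closure {y} = closure T`
    have hyT : y ∈ closure T := by
      rw [← hy]; exact subset_closure rfl
    set 𝒰 : Set (Set Y) := {U | IsOpen U ∧ IsCompact U ∧ y ∈ U} with h𝒰
    set K : Set Y → Set X := fun U => f ⁻¹' U ∩ f ⁻¹' (closure T) with hK
    have hKc : ∀ U ∈ 𝒰, IsCompact (K U) := fun U hU =>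
      (hf.isCompact_preimage_of_isOpen hU.1 hU.2.1).inter_right
        (isClosed_closure.preimage hf.continuous)
    have hKne : ∀ U ∈ 𝒰, (K U).Nonempty := by
      intro U hU
      obtain ⟨t, htU, htT⟩ := mem_closure_iff.mp hyT U hU.1 hU.2.2
      obtain ⟨z, hzZ, rfl⟩ := htT
      obtain ⟨x, hx⟩ := z.2
      refine ⟨x, ?_, ?_⟩
      · rw [Set.mem_preimage, hx]; exact htU
      · rw [Set.mem_preimage, hx]; exact subset_closure ⟨z, hzZ, rfl⟩
    set F : Set (Set X) := {D | IsClosed D ∧ ∀ U ∈ 𝒰, (D ∩ K U).Nonempty} with hF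
    have hunivF : Set.univ ∈ F := ⟨isClosed_univ, fun U hU => by
      simpa using hKne U hU⟩
    have hunivU : Set.univ ∈ 𝒰 := ⟨isOpen_univ, by
      haveI := hY1; exact isCompact_univ, trivial⟩
    -- Zorn: a minimal closed set meeting every `K U`
    have hchain : ∀ c ⊆ F, IsChain (· ⊆ ·) c → ∃ lb ∈ F, ∀ s ∈ c, lb ⊆ s := by
      intro c hcF hc
      rcases c.eq_empty_or_nonempty with rfl | hcne
      · exact ⟨Set.univ, hunivF, by simp⟩
      refine ⟨⋂₀ c, ⟨isClosed_sInter fun D hD => (hcF hD).1, ?_⟩,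
        fun s hs => Set.sInter_subset_of_mem hs⟩
      intro U hU
      have := (hKc U hU).inter_iInter_nonempty (fun D : c => (D : Set X))
        (fun D => (hcF D.2).1) ?_
      · obtain ⟨x, hx1, hx2⟩ := this
        exact ⟨x, Set.mem_sInter.mpr fun D hD => Set.mem_iInter.mp hx2 ⟨D, hD⟩, hx1⟩
      · intro u
        rcases u.eq_empty_or_nonempty with rfl | hune
        · simpa using hKne U hU
        · obtain ⟨a, hau, ha⟩ := Set.Finite.exists_minimalFor
            (fun D : c => (D : Set X)) (↑u : Set c) u.finite_toSet hune
          have hamin : ∀ b ∈ u, (a : Set X) ⊆ b := by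
            intro b hb
            rcases hc.total a.2 b.2 with h | h
            · exact h
            · exact ha hb h
          obtain ⟨x, hx1, hx2⟩ := (hcF a.2).2 U hU
          exact ⟨x, hx2, Set.mem_iInter₂.mpr fun b hb => hamin b hb hx1⟩
    obtain ⟨m, hm⟩ := zorn_superset F hchain
    obtain ⟨hmF, hmmin⟩ := hm
    have hmsub : m ⊆ f ⁻¹' (closure T) := by
      have h1 : m ∩ f ⁻¹' (closure T) ∈ F := by
        refine ⟨hmF.1.inter (isClosed_closure.preimage hf.continuous), fun U hU => ?_⟩
        have : m ∩ f ⁻¹' (closure T) ∩ K U = m ∩ K U := by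
          rw [hK]; ext x; simp only [Set.mem_inter_iff, Set.mem_preimage]; tauto
        rw [this]; exact hmF.2 U hU
      have := hmmin h1 Set.inter_subset_left
      exact fun x hx => (this hx).2
    have hmne : m.Nonempty := ((hmF.2 Set.univ hunivU).mono Set.inter_subset_left)
    have hmirr : IsIrreducible m := by
      refine ⟨hmne, fun u v hu hv ⟨a, ham, hau⟩ ⟨b, hbm, hbv⟩ => ?_⟩
      by_contra hcon
      rw [Set.not_nonempty_iff_eq_empty] at hcon
      have key : ∀ w : Set X, IsOpen w → (m ∩ w).Nonempty →
          ∃ U ∈ 𝒰, (m ∩ wᶜ) ∩ K U = ∅ := by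
        intro w hw hwne
        by_contra hc2
        push_neg at hc2
        have hin : m ∩ wᶜ ∈ F := ⟨hmF.1.inter (isClosed_compl_iff.mpr hw),
          fun U hU => hc2 U hU⟩
        have := hmmin hin Set.inter_subset_left
        obtain ⟨p, hpm, hpw⟩ := hwne
        exact (this hpm).2 hpw
      obtain ⟨U₁, hU₁, hU₁e⟩ := key u hu ⟨a, ham, hau⟩
      obtain ⟨U₂, hU₂, hU₂e⟩ := key v hv ⟨b, hbm, hbv⟩
      have hU₃ : U₁ ∩ U₂ ∈ 𝒰 := ⟨hU₁.1.inter hU₂.1,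
        hY4.inter_isCompact U₁ U₂ hU₁.1 hU₁.2.1 hU₂.1 hU₂.2.1, hU₁.2.2, hU₂.2.2⟩
      obtain ⟨p, hpm, hpK⟩ := hmF.2 _ hU₃
      have hpK1 : p ∈ K U₁ := ⟨hpK.1.1, hpK.2⟩
      have hpK2 : p ∈ K U₂ := ⟨hpK.1.2, hpK.2⟩
      have hpu : p ∈ u := by
        by_contra hpu
        exact Set.eq_empty_iff_forall_notMem.mp hU₁e p ⟨⟨hpm, hpu⟩, hpK1⟩
      have hpv : p ∈ v := by
        by_contra hpv
        exact Set.eq_empty_iff_forall_notMem.mp hU₂e p ⟨⟨hpm, hpv⟩, hpK2⟩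
      exact Set.eq_empty_iff_forall_notMem.mp hcon p ⟨hpm, hpu, hpv⟩
    obtain ⟨ξ, hξ⟩ := hX3.sober hmirr hmF.1
    -- `hξ : closure {ξ} = m`
    have hξm : ξ ∈ m := by rw [← hξ]; exact subset_closure rfl
    have hfy : ∀ U ∈ 𝒰, f ξ ∈ U := by
      intro U hU
      obtain ⟨d, hdm, hdK⟩ := hmF.2 U hU
      have : d ∈ closure ({ξ} : Set X) := by rw [hξ]; exact hdm
      have := mem_closure_iff.mp this (f ⁻¹' U) (hU.1.preimage hf.continuous) hdK.1
      obtain ⟨x, hx1, hx2⟩ := this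
      rw [Set.mem_singleton_iff] at hx2
      subst hx2; exact hx1
    have hfξT : f ξ ∈ closure T := hmsub hξm
    have h1 : y ⤳ f ξ := specializes_iff_mem_closure.mpr (by rw [hy]; exact hfξT)
    have h2 : f ξ ⤳ y := by
      rw [specializes_iff_mem_closure]
      rw [mem_closure_iff]
      intro o ho hyo
      obtain ⟨U, hUb, hyU, hUo⟩ := hY5.exists_subset_of_mem_open hyo ho
      exact ⟨f ξ, hUo (hfy U ⟨hUb.1, hUb.2, hyU⟩), rfl⟩
    have hyeq : y = f ξ := (h1.antisymm h2).eq
    have hyS : y ∈ Set.range f := ⟨ξ, hyeq.symm⟩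
    refine ⟨⟨y, hyS⟩, ?_⟩
    -- closure of the point is Z
    obtain ⟨W, hWcl, hZW⟩ := isClosed_induced_iff.mp hZcl
    have hZeq : Z = Subtype.val ⁻¹' (closure T) := by
      apply Set.Subset.antisymm
      · exact fun z hz => subset_closure ⟨z, hz, rfl⟩
      · intro z hz
        rw [← hZW]
        have hTW : T ⊆ W := by
          rintro t ⟨w, hw, rfl⟩; rw [← hZW] at hw; exact hw
        exact hWcl.closure_subset_iff.mpr hTW hz
    ext pt
    rw [IsGenericPoint] at *
    constructor
    · intro hpt
      have := closure_subtype.mp hpt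
      rw [Set.image_singleton] at this
      rw [hZeq]
      exact Set.mem_preimage.mpr (by rw [← hy]; exact this)
    · intro hpt
      apply closure_subtype.mpr
      rw [Set.image_singleton, hy]
      rw [hZeq] at hpt
      exact hpt
  · -- quasi-separated
    constructor
    intro U V hUo hUc hVo hVc
    obtain ⟨V₁, hV₁o, hV₁c, hV₁e⟩ := aux_compact_open_trace hY5 hf hUo hUc
    obtain ⟨V₂, hV₂o, hV₂c, hV₂e⟩ := aux_compact_open_trace hY5 hf hVo hVc
    rw [hemb.isCompact_iff]
    have : Subtype.val '' (U ∩ V) = (V₁ ∩ V₂) ∩ Set.range f := by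
      rw [Set.image_inter Subtype.val_injective, hV₁e, hV₂e]
      ext z; simp only [Set.mem_inter_iff]; tauto
    rw [this]
    have : (V₁ ∩ V₂) ∩ Set.range f = f '' (f ⁻¹' (V₁ ∩ V₂)) := by
      rw [Set.image_preimage_eq_inter_range]
    rw [this, Set.preimage_inter]
    exact ((hX4.inter_isCompact _ _ (hV₁o.preimage hf.continuous)
      (hf.isCompact_preimage_of_isOpen hV₁o hV₁c) (hV₂o.preimage hf.continuous)
      (hf.isCompact_preimage_of_isOpen hV₂o hV₂c))).image hf.continuous
  · -- basis of compact opens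
    apply isTopologicalBasis_of_isOpen_of_nhds (fun u hu => hu.1)
    intro a u hau huo
    obtain ⟨W, hW, rfl⟩ := isOpen_induced_iff.mp huo
    obtain ⟨V, hVb, haV, hVW⟩ := hY5.exists_subset_of_mem_open hau hW
    exact ⟨Subtype.val ⁻¹' V, ⟨continuous_subtype_val.isOpen_preimage V hVb.1,
      htrace V hVb.1 hVb.2⟩, haV, fun z hz => hVW hz⟩
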